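/- For any finite simple graph G with at least one vertex such that c*(G) > c(G), and any ℓ ≥ 1, the disjoint union of ℓ copies of G satisfies c*(G^{+ℓ}) > c(G^{+ℓ}). -/

import Mathlib

open scoped BigOperators ComplexOrder
open Matrix

noncomputable section

namespace ZeroError

variable {V W : Type*}

/-- The independence number of a simple graph: the maximum cardinality of a set of
pairwise non-adjacent vertices. -/
def indepNum [Fintype V] (G : SimpleGraph V) : ℕ :=
  sSup {n | ∃ s : Finset V, s.card = n ∧ ∀ u ∈ s, ∀ v ∈ s, u ≠ v → ¬ G.Adj u v}

/-- The strong product of two simple graphs. -/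
def strongProd (G : SimpleGraph V) (H : SimpleGraph W) : SimpleGraph (V × W) where
  Adj x y := x ≠ y ∧ (x.1 = y.1 ∨ G.Adj x.1 y.1) ∧ (x.2 = y.2 ∨ H.Adj x.2 y.2)
  symm := by
    constructor
    rintro x y ⟨hne, h1, h2⟩
    exact ⟨hne.symm, h1.imp Eq.symm (fun a => a.symm), h2.imp Eq.symm (fun a => a.symm)⟩
  loopless := by constructor; rintro x ⟨hne, -⟩; exact hne rfl

/-- The n-fold strong power of a simple graph. -/
def strongPow (G : SimpleGraph V) (n : ℕ) : SimpleGraph (Fin n → V) where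
  Adj u v := u ≠ v ∧ ∀ i, u i = v i ∨ G.Adj (u i) (v i)
  symm := by
    constructor
    rintro u v ⟨hne, h⟩
    exact ⟨hne.symm, fun i => (h i).imp Eq.symm (fun a => a.symm)⟩
  loopless := by constructor; rintro u ⟨hne, -⟩; exact hne rfl

/-- `copies G ℓ` is the disjoint union `G^{+ℓ}` of ℓ copies of `G`. -/
def copies (G : SimpleGraph V) (ℓ : ℕ) : SimpleGraph (V × Fin ℓ) where
  Adj x y := x.2 = y.2 ∧ G.Adj x.1 y.1
  symm := by constructor; rintro x y ⟨h1, h2⟩; exact ⟨h1.symm, h2.symm⟩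
  loopless := by constructor; rintro x ⟨-, h⟩; exact G.irrefl h

/-- The Cartesian product `G □ K_t` of a graph with the complete graph on `t` vertices. -/
def cartProdK (G : SimpleGraph V) (t : ℕ) : SimpleGraph (V × Fin t) where
  Adj x y := (G.Adj x.1 y.1 ∧ x.2 = y.2) ∨ (x.1 = y.1 ∧ x.2 ≠ y.2)
  symm := by
    constructor
    rintro x y (⟨h1, h2⟩ | ⟨h1, h2⟩)
    · exact Or.inl ⟨h1.symm, h2.symm⟩
    · exact Or.inr ⟨h1.symm, h2.symm⟩
  loopless := by constructor; rintro x (⟨h, -⟩ | ⟨-, h⟩); exacts [G.irrefl h, h rfl]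

/-- The chromatic number: the least number of colors of a proper coloring. -/
def chromNum [Fintype V] (G : SimpleGraph V) : ℕ :=
  sInf {m | ∃ c : V → Fin m, ∀ u v, G.Adj u v → c u ≠ c v}

/-- The entanglement-assisted independence number `α*(G)`. -/
def qIndepNum [Fintype V] (G : SimpleGraph V) : ℕ :=
  sSup {m | ∃ (d : ℕ) (ρ : Matrix (Fin d) (Fin d) ℂ)
      (σ : Fin m → V → Matrix (Fin d) (Fin d) ℂ),
    ρ.PosSemidef ∧ ρ.trace = 1 ∧ (∀ i u, (σ i u).PosSemidef) ∧
    (∀ i, ∑ u, σ i u = ρ) ∧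
    ∀ i j u v, i ≠ j → (u = v ∨ G.Adj u v) → σ i u * σ j v = 0}

/-- The entanglement-assisted chromatic number `χ*(G)`. -/
def qChromNum [Fintype V] (G : SimpleGraph V) : ℕ :=
  sInf {m | ∃ (d : ℕ) (ρ : Matrix (Fin d) (Fin d) ℂ)
      (σ : V → Fin m → Matrix (Fin d) (Fin d) ℂ),
    ρ.PosSemidef ∧ ρ.trace = 1 ∧ (∀ x i, (σ x i).PosSemidef) ∧
    (∀ x, ∑ i, σ x i = ρ) ∧
    ∀ x y i, G.Adj x y → σ x i * σ y i = 0}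

/-- The partial trace onto the k-th tensor factor:
`(Tr_{B_{-k}} M)_{a,b} = Σ M_{s,t}` over tuples `s, t` with `s k = a`, `t k = b` and
`s r = t r` for all `r ≠ k`. -/
def ptraceK {d ℓ : ℕ} (k : Fin ℓ)
    (M : Matrix (Fin ℓ → Fin d) (Fin ℓ → Fin d) ℂ) : Matrix (Fin d) (Fin d) ℂ :=
  Matrix.of fun a b => ∑ s : Fin ℓ → Fin d, ∑ t : Fin ℓ → Fin d,
    if s k = a ∧ t k = b ∧ ∀ r, r ≠ k → s r = t r then M s t else 0

/-- The entanglement-assisted compound independence number `α*_{1,ℓ}(G)` with ℓ receivers. -/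
def qCompoundNum [Fintype V] (G : SimpleGraph V) (ℓ : ℕ) : ℕ :=
  sSup {m | ∃ (d : ℕ) (ρ : Matrix (Fin ℓ → Fin d) (Fin ℓ → Fin d) ℂ)
      (σ : Fin m → V → Matrix (Fin ℓ → Fin d) (Fin ℓ → Fin d) ℂ),
    ρ.PosSemidef ∧ ρ.trace = 1 ∧ (∀ i u, (σ i u).PosSemidef) ∧
    (∀ i, ∑ u, σ i u = ρ) ∧
    ∀ (k : Fin ℓ) i j u v, i ≠ j → (u = v ∨ G.Adj u v) →
      ptraceK k (σ i u) * ptraceK k (σ j v) = 0}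

/-- The Shannon capacity `c(G) = sup_{n ≥ 1} (1/n) log₂ α(G^{⊠n})`. -/
def shannonCap [Fintype V] (G : SimpleGraph V) : ℝ :=
  ⨆ n : ℕ+, Real.logb 2 (indepNum (strongPow G (n : ℕ))) / ((n : ℕ) : ℝ)

/-- The entangled Shannon capacity `c*(G) = sup_{n ≥ 1} (1/n) log₂ α*(G^{⊠n})`. -/
def qShannonCap [Fintype V] (G : SimpleGraph V) : ℝ :=
  ⨆ n : ℕ+, Real.logb 2 (qIndepNum (strongPow G (n : ℕ))) / ((n : ℕ) : ℝ)

/-- The entanglement-assisted compound Shannon capacity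
`c*_{1,ℓ}(G) = sup_{n ≥ 1} (1/n) log₂ α*_{1,ℓ}(G^{⊠n})`. -/
def qCompoundCap [Fintype V] (G : SimpleGraph V) (ℓ : ℕ) : ℝ :=
  ⨆ n : ℕ+, Real.logb 2 (qCompoundNum (strongPow G (n : ℕ)) ℓ) / ((n : ℕ) : ℝ)

/-- The edge-clique cover number `θ_e(G)`: the least number of cliques covering all edges. -/
def edgeCliqueCoverNum [Fintype V] (G : SimpleGraph V) : ℕ :=
  sInf {n | ∃ F : Finset (Finset V), F.card = n ∧ (∀ c ∈ F, G.IsClique (c : Set V)) ∧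
    ∀ u v, G.Adj u v → ∃ c ∈ F, u ∈ c ∧ v ∈ c}

/-- `θ'_e(G)`: the edge-clique cover number plus the number of isolated vertices. -/
def thetaPrime [Fintype V] (G : SimpleGraph V) : ℕ :=
  edgeCliqueCoverNum G + {v : V | ∀ u, ¬ G.Adj v u}.ncard

/-- `f` is an orthogonal representation of `G` in dimension `d`. -/
def IsOrthRep (G : SimpleGraph V) (d : ℕ) (f : V → EuclideanSpace ℂ (Fin d)) : Prop :=
  (∀ v, ‖f v‖ = 1) ∧ ∀ u v, G.Adj u v → inner ℂ (f u) (f v) = (0 : ℂ)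

/-- The orthogonal rank `ξ(G)`. -/
def orthRank (G : SimpleGraph V) : ℕ :=
  sInf {d | ∃ f : V → EuclideanSpace ℂ (Fin d), IsOrthRep G d f}

/-- Vertices of the quarter orthogonality graph `Γ_k`: ±1-vectors of length `k+1`
with first coordinate 1 and an even number of -1 entries. -/
def QOVertex (k : ℕ) : Type :=
  {u : Fin (k + 1) → ℤ // (∀ i, u i = 1 ∨ u i = -1) ∧ u 0 = 1 ∧
    Even ((Finset.univ.filter fun i => u i = -1).card)}

instance (k : ℕ) : Fintype (QOVertex k) :=
  Fintype.ofInjective (fun u : QOVertex k => fun i => decide (u.val i = 1))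
    (by
      intro u v h
      apply Subtype.ext; funext i
      have hi := congrFun h i
      rcases u.prop.1 i with h1 | h1 <;> rcases v.prop.1 i with h2 | h2 <;>
        simp [h1, h2] at hi ⊢)

/-- The quarter orthogonality graph `Γ_k`. -/
def quarterOrthGraph (k : ℕ) : SimpleGraph (QOVertex k) where
  Adj u v := u ≠ v ∧ ∑ i, u.val i * v.val i = 0
  symm := by
    constructor
    rintro u v ⟨hne, h⟩
    refine ⟨hne.symm, ?_⟩
    rw [← h]
    exact Finset.sum_congr rfl fun i _ => mul_comm _ _
  loopless := by constructor; rintro u ⟨hne, -⟩; exact hne rfl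

/-- Vertices of the orthogonality graph `Ω_k`: all ±1-vectors of length `k`. -/
def PMVertex (k : ℕ) : Type :=
  {u : Fin k → ℤ // ∀ i, u i = 1 ∨ u i = -1}

instance (k : ℕ) : Fintype (PMVertex k) :=
  Fintype.ofInjective (fun u : PMVertex k => fun i => decide (u.val i = 1))
    (by
      intro u v h
      apply Subtype.ext; funext i
      have hi := congrFun h i
      rcases u.prop i with h1 | h1 <;> rcases v.prop i with h2 | h2 <;>
        simp [h1, h2] at hi ⊢)

/-- The orthogonality graph `Ω_k`. -/
def orthGraph (k : ℕ) : SimpleGraph (PMVertex k) where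
  Adj u v := u ≠ v ∧ ∑ i, u.val i * v.val i = 0
  symm := by
    constructor
    rintro u v ⟨hne, h⟩
    refine ⟨hne.symm, ?_⟩
    rw [← h]
    exact Finset.sum_congr rfl fun i _ => mul_comm _ _
  loopless := by constructor; rintro u ⟨hne, -⟩; exact hne rfl



/-! ### Auxiliary lemmas for Statement 9 -/

section Aux9

open Real
open scoped MatrixOrder

/-- trace of `Aᴴ * A` as a sum of squared norms. -/
private lemma trace_ctm_eq {n : Type*} [Fintype n] (A : Matrix n n ℂ) :
    (Aᴴ * A).trace = ((∑ j, ∑ i, Complex.normSq (A i j) : ℝ) : ℂ) := by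
  simp only [Matrix.trace, Matrix.mul_apply, Matrix.conjTranspose_apply, Matrix.diag]
  push_cast
  congr 1; ext x; congr 1; ext y
  rw [Complex.normSq_eq_conj_mul_self]
  rfl

private lemma psd_trace_nonneg {n : Type*} [Fintype n] [DecidableEq n] {A : Matrix n n ℂ}
    (hA : A.PosSemidef) : 0 ≤ A.trace := by
  rw [Matrix.trace]
  refine Finset.sum_nonneg fun i _ => ?_
  exact hA.diag_nonneg

private lemma psd_trace_mul_nonneg {n : Type*} [Fintype n] [DecidableEq n]
    {A B : Matrix n n ℂ} (hA : A.PosSemidef) (hB : B.PosSemidef) : 0 ≤ (A * B).trace := by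
  have h2 : (A * B).trace = (CFC.sqrt A * B * CFC.sqrt A).trace := by
    conv_lhs => rw [← CFC.sqrt_mul_sqrt_self A hA.nonneg]
    rw [Matrix.mul_assoc, Matrix.trace_mul_comm, Matrix.mul_assoc]
  rw [h2]
  have h3 : (CFC.sqrt A * B * CFC.sqrt A).PosSemidef := by
    have := hB.mul_mul_conjTranspose_same (CFC.sqrt A)
    rwa [(CFC.sqrt_nonneg A).posSemidef.isHermitian.eq] at this
  exact psd_trace_nonneg h3

private lemma herm_trace_sq_nonneg {n : Type*} [Fintype n] {A : Matrix n n ℂ}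
    (hA : A.IsHermitian) : 0 ≤ (A * A).trace := by
  have h : (A * A).trace = (Aᴴ * A).trace := by rw [hA.eq]
  rw [h, trace_ctm_eq]
  have : (0:ℝ) ≤ ∑ j, ∑ i, Complex.normSq (A i j) :=
    Finset.sum_nonneg fun _ _ => Finset.sum_nonneg fun _ _ => Complex.normSq_nonneg _
  exact_mod_cast this

private lemma trace_sq_pos {n : Type*} [Fintype n] {A : Matrix n n ℂ} (hA : A.PosSemidef)
    (hne : A ≠ 0) : 0 < (A * A).trace := by
  have heq : (A * A).trace = (Aᴴ * A).trace := by rw [hA.isHermitian.eq]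
  obtain ⟨i, j, hij⟩ : ∃ i j, A i j ≠ 0 := by
    by_contra hc
    push_neg at hc
    exact hne (by ext i j; simpa using hc i j)
  have hpos : (0:ℝ) < ∑ j, ∑ i, Complex.normSq (A i j) := by
    refine Finset.sum_pos' (fun k _ => Finset.sum_nonneg fun _ _ => Complex.normSq_nonneg _)
      ⟨j, Finset.mem_univ j, ?_⟩
    exact Finset.sum_pos' (fun k _ => Complex.normSq_nonneg _)
      ⟨i, Finset.mem_univ i, Complex.normSq_pos.2 hij⟩
  rw [heq, trace_ctm_eq, Complex.lt_def]
  exact ⟨by simpa using hpos, by simp⟩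

private lemma psd_sum {n : Type*} [Fintype n] {ι : Type*} (s : Finset ι)
    (f : ι → Matrix n n ℂ) (h : ∀ i ∈ s, (f i).PosSemidef) : (∑ i ∈ s, f i).PosSemidef := by
  classical
  induction s using Finset.induction with
  | empty => simpa using Matrix.PosSemidef.zero
  | insert _ _ hx ih =>
    rw [Finset.sum_insert hx]
    exact ((h _ (Finset.mem_insert_self _ _)).add
      (ih fun i hi => h i (Finset.mem_insert_of_mem hi)))

private lemma nat_le_of_mul_le {m n : ℕ} {t : ℂ} (ht : 0 < t)
    (h : (m:ℂ) * t ≤ (n:ℂ) * t) : m ≤ n := by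
  rw [Complex.le_def] at h
  rw [Complex.lt_def] at ht
  have him : t.im = 0 := by simpa using ht.2.symm
  have hre : (0:ℝ) < t.re := by simpa using ht.1
  simp [Complex.mul_re, him] at h
  have := (mul_le_mul_iff_left₀ hre).mp (by simpa using h)
  exact_mod_cast this

/-- Any feasible number of messages is at most the number of vertices. -/
private lemma feasible_le_card {W : Type*} [Fintype W] {m d : ℕ}
    {ρ : Matrix (Fin d) (Fin d) ℂ} {σ : Fin m → W → Matrix (Fin d) (Fin d) ℂ}
    (hρ : ρ.PosSemidef) (htr : ρ.trace = 1)
    (hσ : ∀ i u, (σ i u).PosSemidef)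
    (hsum : ∀ i, ∑ u, σ i u = ρ)
    (horth : ∀ i j u, i ≠ j → σ i u * σ j u = 0) :
    m ≤ Fintype.card W := by
  classical
  set t : ℂ := (ρ * ρ).trace with ht_def
  have hρne : ρ ≠ 0 := fun hc => by simp [hc] at htr
  have ht : 0 < t := trace_sq_pos hρ hρne
  have hle : ∀ i u, (ρ - σ i u).PosSemidef := by
    intro i u
    have : ρ - σ i u = ∑ v ∈ Finset.univ.erase u, σ i v := by
      rw [← hsum i]
      rw [← Finset.add_sum_erase _ _ (Finset.mem_univ u)]
      exact add_sub_cancel_left _ _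
    rw [this]
    exact psd_sum _ _ fun v _ => hσ i v
  have hkey : ∀ i u, (σ i u * σ i u).trace ≤ (σ i u * ρ).trace := by
    intro i u
    have h0 : 0 ≤ (σ i u * (ρ - σ i u)).trace := psd_trace_mul_nonneg (hσ i u) (hle i u)
    rw [Matrix.mul_sub, Matrix.trace_sub] at h0
    exact sub_nonneg.mp h0
  set S : W → Matrix (Fin d) (Fin d) ℂ := fun u => ∑ i, σ i u with hS_def
  have hShera : ∀ u, (S u).IsHermitian := fun u => (psd_sum _ _ fun i _ => hσ i u).isHermitian
  have hDh : ∀ u : W, ((ρ - S u) * (ρ - S u)).trace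
      = (ρ*ρ).trace - (ρ * S u).trace - (S u * ρ).trace + (S u * S u).trace := by
    intro u
    rw [Matrix.sub_mul, Matrix.mul_sub, Matrix.mul_sub, Matrix.trace_sub, Matrix.trace_sub,
      Matrix.trace_sub]
    ring
  have h0 : 0 ≤ ∑ u, ((ρ - S u) * (ρ - S u)).trace :=
    Finset.sum_nonneg fun u _ => herm_trace_sq_nonneg (hρ.isHermitian.sub (hShera u))
  have hsum1 : ∑ u, (ρ * S u).trace = (m:ℂ) * t := by
    calc ∑ u, (ρ * S u).trace = ∑ u, ∑ i, (ρ * σ i u).trace := by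
          refine Finset.sum_congr rfl fun u _ => ?_
          rw [hS_def]
          rw [Finset.mul_sum, Matrix.trace_sum]
      _ = ∑ i, ∑ u, (ρ * σ i u).trace := Finset.sum_comm
      _ = ∑ i : Fin m, t := by
          refine Finset.sum_congr rfl fun i _ => ?_
          rw [← Matrix.trace_sum, ← Finset.mul_sum, hsum i]
      _ = (m:ℂ) * t := by simp [Finset.sum_const, mul_comm]
  have hsum2 : ∑ u, (S u * ρ).trace = (m:ℂ) * t := by
    calc ∑ u, (S u * ρ).trace = ∑ u, (ρ * S u).trace := by
          refine Finset.sum_congr rfl fun u _ => Matrix.trace_mul_comm _ _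
      _ = (m:ℂ) * t := hsum1
  have hSsq : ∀ u, (S u * S u).trace = ∑ i, (σ i u * σ i u).trace := by
    intro u
    rw [hS_def]
    rw [Finset.sum_mul_sum]
    rw [Matrix.trace_sum]
    simp_rw [Matrix.trace_sum]
    refine Finset.sum_congr rfl fun i _ => ?_
    rw [Finset.sum_eq_single i]
    · intro j _ hji
      rw [horth i j u (Ne.symm hji), Matrix.trace_zero]
    · intro hi; exact absurd (Finset.mem_univ i) hi
  have hbound : ∑ u, ∑ i, (σ i u * σ i u).trace ≤ (m:ℂ) * t := by
    calc ∑ u, ∑ i, (σ i u * σ i u).trace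
        ≤ ∑ u, ∑ i, (σ i u * ρ).trace := by
          refine Finset.sum_le_sum fun u _ => Finset.sum_le_sum fun i _ => hkey i u
      _ = ∑ i, ∑ u, (σ i u * ρ).trace := Finset.sum_comm
      _ = ∑ i : Fin m, t := by
          refine Finset.sum_congr rfl fun i _ => ?_
          rw [← Matrix.trace_sum, ← Finset.sum_mul, hsum i, ht_def, Matrix.trace_mul_comm]
      _ = (m:ℂ) * t := by simp [Finset.sum_const, mul_comm]
  have hexp : ∑ u, ((ρ - S u) * (ρ - S u)).trace
      = (Fintype.card W : ℂ) * t - 2 * ((m:ℂ)*t) + ∑ u, ∑ i, (σ i u * σ i u).trace := by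
    calc ∑ u, ((ρ - S u) * (ρ - S u)).trace
        = ∑ u, ((ρ*ρ).trace - (ρ * S u).trace - (S u * ρ).trace + (S u * S u).trace) :=
          Finset.sum_congr rfl fun u _ => hDh u
      _ = (∑ _u : W, t) - (∑ u, (ρ * S u).trace) - (∑ u, (S u * ρ).trace)
            + ∑ u, (S u * S u).trace := by
          rw [Finset.sum_add_distrib, Finset.sum_sub_distrib, Finset.sum_sub_distrib]
      _ = (Fintype.card W : ℂ) * t - 2 * ((m:ℂ)*t) + ∑ u, ∑ i, (σ i u * σ i u).trace := by
          rw [hsum1, hsum2]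
          simp [Finset.sum_const, mul_comm]
          rw [Finset.sum_congr rfl fun u _ => hSsq u]
          ring
  have hfinal : (m:ℂ) * t ≤ (Fintype.card W : ℂ) * t := by
    have h1 : 2 * ((m:ℂ)*t) - ∑ u, ∑ i, (σ i u * σ i u).trace ≤ (Fintype.card W : ℂ) * t := by
      have h3 := h0
      rw [hexp] at h3
      have h2 : 2 * ((m:ℂ)*t) - ∑ u, ∑ i, (σ i u * σ i u).trace ≤
          2 * ((m:ℂ)*t) - ∑ u, ∑ i, (σ i u * σ i u).trace +
          ((Fintype.card W : ℂ) * t - 2 * ((m:ℂ)*t) + ∑ u, ∑ i, (σ i u * σ i u).trace) :=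
        le_add_of_nonneg_right h3
      calc 2 * ((m:ℂ)*t) - ∑ u, ∑ i, (σ i u * σ i u).trace ≤ _ := h2
        _ = (Fintype.card W : ℂ) * t := by ring
    calc (m:ℂ) * t = 2 * ((m:ℂ)*t) - (m:ℂ)*t := by ring
      _ ≤ 2 * ((m:ℂ)*t) - ∑ u, ∑ i, (σ i u * σ i u).trace := sub_le_sub_left hbound _
      _ ≤ (Fintype.card W : ℂ) * t := h1
  exact nat_le_of_mul_le ht hfinal

variable {W' : Type*} [Fintype W']

/-! #### independence number basics -/

private lemma le_indepNum (H : SimpleGraph W') (s : Finset W')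
    (hs : ∀ u ∈ s, ∀ v ∈ s, u ≠ v → ¬ H.Adj u v) : s.card ≤ indepNum H := by
  refine le_csSup ⟨Fintype.card W', ?_⟩ ⟨s, rfl, hs⟩
  rintro n ⟨s', rfl, -⟩
  exact s'.card_le_univ

private lemma indepNum_le (H : SimpleGraph W') {K : ℕ}
    (hK : ∀ s : Finset W', (∀ u ∈ s, ∀ v ∈ s, u ≠ v → ¬ H.Adj u v) → s.card ≤ K) :
    indepNum H ≤ K := by
  refine csSup_le ⟨0, ∅, by simp⟩ ?_
  rintro n ⟨s, rfl, hs⟩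
  exact hK s hs

private lemma one_le_indepNum [Nonempty W'] (H : SimpleGraph W') : 1 ≤ indepNum H := by
  have := le_indepNum H {Classical.arbitrary W'} ?_
  · simpa using this
  · intro u hu v hv huv
    simp only [Finset.mem_singleton] at hu hv
    exact absurd (hu.trans hv.symm) huv

private lemma indepNum_le_card (H : SimpleGraph W') : indepNum H ≤ Fintype.card W' :=
  indepNum_le H fun s _ => s.card_le_univ

/-! #### quantum independence number basics -/

private lemma qZero_mem (H : SimpleGraph W') :
    0 ∈ {m | ∃ (d : ℕ) (ρ : Matrix (Fin d) (Fin d) ℂ)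
      (σ : Fin m → W' → Matrix (Fin d) (Fin d) ℂ),
    ρ.PosSemidef ∧ ρ.trace = 1 ∧ (∀ i u, (σ i u).PosSemidef) ∧
    (∀ i, ∑ u, σ i u = ρ) ∧
    ∀ i j u v, i ≠ j → (u = v ∨ H.Adj u v) → σ i u * σ j v = 0} := by
  refine ⟨1, 1, fun i _ => 0, Matrix.PosSemidef.one, by simp, fun i => (i.elim0),
    fun i => (i.elim0), fun i => (i.elim0)⟩

private lemma qSet_bddAbove (H : SimpleGraph W') :
    BddAbove {m | ∃ (d : ℕ) (ρ : Matrix (Fin d) (Fin d) ℂ)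
      (σ : Fin m → W' → Matrix (Fin d) (Fin d) ℂ),
    ρ.PosSemidef ∧ ρ.trace = 1 ∧ (∀ i u, (σ i u).PosSemidef) ∧
    (∀ i, ∑ u, σ i u = ρ) ∧
    ∀ i j u v, i ≠ j → (u = v ∨ H.Adj u v) → σ i u * σ j v = 0} := by
  refine ⟨Fintype.card W', ?_⟩
  rintro m ⟨d, ρ, σ, hρ, htr, hσ, hsum, horth⟩
  exact feasible_le_card hρ htr hσ hsum fun i j u hij => horth i j u u hij (Or.inl rfl)

private lemma qIndepNum_le_card (H : SimpleGraph W') : qIndepNum H ≤ Fintype.card W' := by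
  refine csSup_le ⟨0, qZero_mem H⟩ ?_
  rintro m ⟨d, ρ, σ, hρ, htr, hσ, hsum, horth⟩
  exact feasible_le_card hρ htr hσ hsum fun i j u hij => horth i j u u hij (Or.inl rfl)

private lemma one_le_qIndepNum [Nonempty W'] (H : SimpleGraph W') : 1 ≤ qIndepNum H := by
  classical
  refine le_csSup (qSet_bddAbove H) ?_
  refine ⟨1, 1, fun _ u => if u = Classical.arbitrary W' then 1 else 0,
    Matrix.PosSemidef.one, by simp, ?_, ?_, ?_⟩
  · intro i u
    simp only
    split
    · exact Matrix.PosSemidef.one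
    · exact Matrix.PosSemidef.zero
  · intro i; simp
  · intro i j u v hij _
    exact absurd (Subsingleton.elim i j) hij

private lemma qIndepNum_mem (H : SimpleGraph W') :
    qIndepNum H ∈ {m | ∃ (d : ℕ) (ρ : Matrix (Fin d) (Fin d) ℂ)
      (σ : Fin m → W' → Matrix (Fin d) (Fin d) ℂ),
    ρ.PosSemidef ∧ ρ.trace = 1 ∧ (∀ i u, (σ i u).PosSemidef) ∧
    (∀ i, ∑ u, σ i u = ρ) ∧
    ∀ i j u v, i ≠ j → (u = v ∨ H.Adj u v) → σ i u * σ j v = 0} :=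
  Nat.sSup_mem ⟨0, qZero_mem H⟩ (qSet_bddAbove H)

/-! #### disjoint-union versus strong powers -/

private lemma indep_strongPow_copies_le {V : Type} [Fintype V] (G : SimpleGraph V)
    (ℓ n : ℕ) :
    indepNum (strongPow (copies G ℓ) n) ≤ ℓ ^ n * indepNum (strongPow G n) := by
  classical
  refine indepNum_le _ fun s hs => ?_
  set c : (Fin n → V × Fin ℓ) → (Fin n → Fin ℓ) := fun u k => (u k).2 with hc
  rw [Finset.card_eq_sum_card_fiberwise (f := c) (t := (Finset.univ : Finset (Fin n → Fin ℓ)))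
    (fun u _ => Finset.mem_univ _)]
  have hfib : ∀ c₀ : Fin n → Fin ℓ,
      (s.filter fun u => c u = c₀).card ≤ indepNum (strongPow G n) := by
    intro c₀
    set f : (Fin n → V × Fin ℓ) → (Fin n → V) := fun u k => (u k).1 with hf
    have hinj : Set.InjOn f (s.filter fun u => c u = c₀) := by
      intro u hu v hv hfe
      simp only [Finset.coe_filter, Set.mem_setOf_eq] at hu hv
      funext k
      have h1 : (u k).1 = (v k).1 := congrFun hfe k
      have h2 : (u k).2 = (v k).2 := by
        have := hu.2.trans hv.2.symm
        exact congrFun this k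
      exact Prod.ext_iff.mpr ⟨h1, h2⟩
    rw [← Finset.card_image_of_injOn hinj]
    refine le_indepNum _ _ ?_
    intro x hx y hy hxy hadj
    obtain ⟨u, hu, rfl⟩ := Finset.mem_image.mp hx
    obtain ⟨v, hv, rfl⟩ := Finset.mem_image.mp hy
    have huv : u ≠ v := fun hc' => hxy (by rw [hc'])
    obtain ⟨hfne, hall⟩ := hadj
    have hmu := Finset.mem_filter.mp hu
    have hmv := Finset.mem_filter.mp hv
    refine hs u hmu.1 v hmv.1 huv ?_
    refine ⟨huv, fun k => ?_⟩
    have hck : (u k).2 = (v k).2 := by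
      have := hmu.2.trans hmv.2.symm
      exact congrFun this k
    rcases hall k with heq | hGadj
    · exact Or.inl (Prod.ext_iff.mpr ⟨heq, hck⟩)
    · exact Or.inr ⟨hck, hGadj⟩
  calc ∑ c₀ : Fin n → Fin ℓ, (s.filter fun u => c u = c₀).card
      ≤ ∑ _c₀ : Fin n → Fin ℓ, indepNum (strongPow G n) :=
        Finset.sum_le_sum fun c₀ _ => hfib c₀
    _ = ℓ ^ n * indepNum (strongPow G n) := by
        simp [Finset.sum_const, Finset.card_univ]

private lemma qIndep_strongPow_copies_ge {V : Type} [Fintype V] (G : SimpleGraph V)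
    (ℓ n : ℕ) :
    ℓ ^ n * qIndepNum (strongPow G n) ≤ qIndepNum (strongPow (copies G ℓ) n) := by
  classical
  obtain ⟨d, ρ, σ, hρ, htr, hσ, hsum, horth⟩ := qIndepNum_mem (strongPow G n)
  refine le_csSup (qSet_bddAbove _) ?_
  have hcards : Fintype.card (Fin (ℓ ^ n * qIndepNum (strongPow G n)))
      = Fintype.card ((Fin n → Fin ℓ) × Fin (qIndepNum (strongPow G n))) := by
    simp [Fintype.card_fun]
  set e : Fin (ℓ ^ n * qIndepNum (strongPow G n)) ≃
    (Fin n → Fin ℓ) × Fin (qIndepNum (strongPow G n)) := Fintype.equivOfCardEq hcards with he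
  set e2 : ((Fin n → V) × (Fin n → Fin ℓ)) ≃ (Fin n → V × Fin ℓ) :=
    (Equiv.arrowProdEquivProdArrow (Fin n) (fun _ => V) (fun _ => Fin ℓ)).symm with he2
  refine ⟨d, ρ, fun i' u =>
    if (fun k => (u k).2) = (e i').1 then σ (e i').2 (fun k => (u k).1) else 0,
    hρ, htr, ?_, ?_, ?_⟩
  · intro i u
    simp only
    split
    · exact hσ _ _
    · exact Matrix.PosSemidef.zero
  · intro i'
    have hre := Fintype.sum_equiv e2
      (fun p => if (fun k => ((e2 p) k).2) = (e i').1
        then σ (e i').2 (fun k => ((e2 p) k).1) else 0)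
      (fun u => if (fun k => (u k).2) = (e i').1 then σ (e i').2 (fun k => (u k).1) else 0)
      (fun p => rfl)
    rw [← hre, Fintype.sum_prod_type]
    have hterm : ∀ (f : Fin n → V) (cc : Fin n → Fin ℓ),
        (if (fun k => ((e2 (f, cc)) k).2) = (e i').1
          then σ (e i').2 (fun k => ((e2 (f, cc)) k).1) else 0)
        = if cc = (e i').1 then σ (e i').2 f else 0 := fun f cc => rfl
    simp_rw [hterm, Finset.sum_ite_eq' Finset.univ, Finset.mem_univ, if_true]
    exact hsum (e i').2
  · intro i' j' u v hne hor
    simp only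
    by_cases h1 : (fun k => (u k).2) = (e i').1
    · by_cases h2 : (fun k => (v k).2) = (e j').1
      · rw [if_pos h1, if_pos h2]
        have hcc : (fun k => (u k).2) = (fun k => (v k).2) := by
          rcases hor with rfl | ⟨hune, hall⟩
          · rfl
          · funext k
            rcases hall k with heq | hadj
            · rw [heq]
            · exact hadj.1
        have hc12 : (e i').1 = (e j').1 := by rw [← h1, ← h2, hcc]
        have hij : (e i').2 ≠ (e j').2 := by
          intro hcon
          apply hne
          apply e.injective
          exact Prod.ext hc12 hcon
        refine horth (e i').2 (e j').2 _ _ hij ?_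
        rcases hor with rfl | ⟨hune, hall⟩
        · exact Or.inl rfl
        · by_cases hfe : (fun k => (u k).1) = (fun k => (v k).1)
          · exact Or.inl hfe
          · refine Or.inr ⟨hfe, fun k => ?_⟩
            rcases hall k with heq | hadj
            · exact Or.inl (congrArg Prod.fst heq)
            · exact Or.inr hadj.2
      · rw [if_neg h2, mul_zero]
    · rw [if_neg h1, zero_mul]

/-! #### capacity families are bounded -/

private lemma cap_family_bdd {g : ℕ+ → ℕ} {C : ℕ} (hC : 1 ≤ C) (hg : ∀ n : ℕ+, g n ≤ C ^ (n:ℕ)) :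
    BddAbove (Set.range fun n : ℕ+ => Real.logb 2 (g n) / ((n:ℕ):ℝ)) := by
  refine ⟨Real.logb 2 C, ?_⟩
  rintro x ⟨n, rfl⟩
  dsimp only
  have hn : (0:ℝ) < ((n:ℕ):ℝ) := by exact_mod_cast n.pos
  rw [div_le_iff₀ hn]
  have hCpos : (0:ℝ) ≤ Real.logb 2 C := Real.logb_nonneg one_lt_two (by exact_mod_cast hC)
  by_cases hg0 : g n = 0
  · rw [hg0]
    simp only [Nat.cast_zero, Real.logb_zero]
    exact mul_nonneg hCpos hn.le
  · have h1 : (1:ℝ) ≤ (g n : ℝ) := by exact_mod_cast Nat.one_le_iff_ne_zero.2 hg0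
    calc Real.logb 2 (g n) ≤ Real.logb 2 ((C:ℝ) ^ (n:ℕ)) := by
          refine Real.logb_le_logb_of_le one_lt_two (by linarith) ?_
          exact_mod_cast hg n
      _ = ((n:ℕ):ℝ) * Real.logb 2 C := by rw [Real.logb_pow]
      _ = Real.logb 2 (C:ℝ) * ((n:ℕ):ℝ) := mul_comm _ _

private lemma shannon_bdd [Nonempty W'] (H : SimpleGraph W') :
    BddAbove (Set.range fun n : ℕ+ =>
      Real.logb 2 (indepNum (strongPow H (n:ℕ))) / ((n:ℕ):ℝ)) := by
  refine cap_family_bdd (C := Fintype.card W') Fintype.card_pos fun n => ?_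
  have := indepNum_le_card (strongPow H (n:ℕ))
  simpa [Fintype.card_fun] using this

private lemma qshannon_bdd [Nonempty W'] (H : SimpleGraph W') :
    BddAbove (Set.range fun n : ℕ+ =>
      Real.logb 2 (qIndepNum (strongPow H (n:ℕ))) / ((n:ℕ):ℝ)) := by
  refine cap_family_bdd (C := Fintype.card W') Fintype.card_pos fun n => ?_
  have := qIndepNum_le_card (strongPow H (n:ℕ))
  simpa [Fintype.card_fun] using this

end Aux9

/-- if `c*(G) > c(G)` then `c*(G^{+ℓ}) > c(G^{+ℓ})` for every `ℓ ≥ 1`. -/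
theorem qCap_disjoint_union_gt {V : Type} [Fintype V] [Nonempty V] (G : SimpleGraph V)
    (h : shannonCap G < qShannonCap G) (ℓ : ℕ) (hℓ : 1 ≤ ℓ) :
    shannonCap (copies G ℓ) < qShannonCap (copies G ℓ) := by
  classical
  haveI : Nonempty (V × Fin ℓ) := ⟨(Classical.arbitrary V, ⟨0, hℓ⟩)⟩
  set L : ℝ := Real.logb 2 (ℓ:ℝ) with hL
  have hlpos : (0:ℝ) < (ℓ:ℝ) := by exact_mod_cast hℓ
  have bddSG := shannon_bdd G
  have bddQB := qshannon_bdd (copies G ℓ)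
  have key1 : shannonCap (copies G ℓ) ≤ L + shannonCap G := by
    refine ciSup_le fun n => ?_
    have hα1 : 1 ≤ indepNum (strongPow (copies G ℓ) (n:ℕ)) :=
      one_le_indepNum (strongPow (copies G ℓ) (n:ℕ))
    have hαG1 : 1 ≤ indepNum (strongPow G (n:ℕ)) := one_le_indepNum (strongPow G (n:ℕ))
    have hle := indep_strongPow_copies_le G ℓ (n:ℕ)
    have hn : (0:ℝ) < ((n:ℕ):ℝ) := by exact_mod_cast n.pos
    have hα1R : (1:ℝ) ≤ (indepNum (strongPow (copies G ℓ) (n:ℕ)) : ℝ) := by exact_mod_cast hα1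
    have hαG1R : (1:ℝ) ≤ (indepNum (strongPow G (n:ℕ)) : ℝ) := by exact_mod_cast hαG1
    have hlog : Real.logb 2 (indepNum (strongPow (copies G ℓ) (n:ℕ)))
        ≤ ((n:ℕ):ℝ) * L + Real.logb 2 (indepNum (strongPow G (n:ℕ))) := by
      calc Real.logb 2 (indepNum (strongPow (copies G ℓ) (n:ℕ)))
          ≤ Real.logb 2 ((ℓ:ℝ)^(n:ℕ) * (indepNum (strongPow G (n:ℕ)) : ℝ)) := by
            refine Real.logb_le_logb_of_le one_lt_two (by linarith) ?_
            exact_mod_cast hle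
        _ = Real.logb 2 ((ℓ:ℝ)^(n:ℕ)) + Real.logb 2 (indepNum (strongPow G (n:ℕ))) :=
            Real.logb_mul (by positivity) (by linarith)
        _ = ((n:ℕ):ℝ) * L + Real.logb 2 (indepNum (strongPow G (n:ℕ))) := by
            rw [Real.logb_pow]
    have hdiv : Real.logb 2 (indepNum (strongPow (copies G ℓ) (n:ℕ))) / ((n:ℕ):ℝ)
        ≤ L + Real.logb 2 (indepNum (strongPow G (n:ℕ))) / ((n:ℕ):ℝ) := by
      calc Real.logb 2 (indepNum (strongPow (copies G ℓ) (n:ℕ))) / ((n:ℕ):ℝ)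
          ≤ (((n:ℕ):ℝ) * L + Real.logb 2 (indepNum (strongPow G (n:ℕ)))) / ((n:ℕ):ℝ) := by
            exact div_le_div_of_nonneg_right hlog hn.le
        _ = L + Real.logb 2 (indepNum (strongPow G (n:ℕ))) / ((n:ℕ):ℝ) := by
            rw [add_div, mul_div_cancel_left₀ _ (ne_of_gt hn)]
    refine hdiv.trans ?_
    have h2 := le_ciSup bddSG n
    have hS : shannonCap G = ⨆ n : ℕ+,
        Real.logb 2 (indepNum (strongPow G ((n:ℕ)))) / ((n:ℕ):ℝ) := rfl
    rw [hS]
    exact add_le_add_right h2 L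
  have key2 : L + qShannonCap G ≤ qShannonCap (copies G ℓ) := by
    have hq : qShannonCap G ≤ qShannonCap (copies G ℓ) - L := by
      refine ciSup_le fun n => ?_
      have hqG1 : 1 ≤ qIndepNum (strongPow G (n:ℕ)) := one_le_qIndepNum (strongPow G (n:ℕ))
      have hge := qIndep_strongPow_copies_ge G ℓ (n:ℕ)
      have hn : (0:ℝ) < ((n:ℕ):ℝ) := by exact_mod_cast n.pos
      have hqG1R : (1:ℝ) ≤ (qIndepNum (strongPow G (n:ℕ)) : ℝ) := by exact_mod_cast hqG1
      have hlog : ((n:ℕ):ℝ) * L + Real.logb 2 (qIndepNum (strongPow G (n:ℕ)))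
          ≤ Real.logb 2 (qIndepNum (strongPow (copies G ℓ) (n:ℕ))) := by
        calc ((n:ℕ):ℝ) * L + Real.logb 2 (qIndepNum (strongPow G (n:ℕ)))
            = Real.logb 2 ((ℓ:ℝ)^(n:ℕ) * (qIndepNum (strongPow G (n:ℕ)) : ℝ)) := by
              rw [Real.logb_mul (by positivity) (by linarith), Real.logb_pow]
          _ ≤ Real.logb 2 (qIndepNum (strongPow (copies G ℓ) (n:ℕ))) := by
              refine Real.logb_le_logb_of_le one_lt_two (by positivity) ?_
              exact_mod_cast hge
      have h2 : L + Real.logb 2 (qIndepNum (strongPow G (n:ℕ))) / ((n:ℕ):ℝ)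
          ≤ Real.logb 2 (qIndepNum (strongPow (copies G ℓ) (n:ℕ))) / ((n:ℕ):ℝ) := by
        calc L + Real.logb 2 (qIndepNum (strongPow G (n:ℕ))) / ((n:ℕ):ℝ)
            = (((n:ℕ):ℝ) * L + Real.logb 2 (qIndepNum (strongPow G (n:ℕ)))) / ((n:ℕ):ℝ) := by
              rw [add_div, mul_div_cancel_left₀ _ (ne_of_gt hn)]
          _ ≤ Real.logb 2 (qIndepNum (strongPow (copies G ℓ) (n:ℕ))) / ((n:ℕ):ℝ) :=
              div_le_div_of_nonneg_right hlog hn.le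
      have h3 := le_ciSup bddQB n
      have hQ : qShannonCap (copies G ℓ) = ⨆ n : ℕ+,
          Real.logb 2 (qIndepNum (strongPow (copies G ℓ) ((n:ℕ)))) / ((n:ℕ):ℝ) := rfl
      rw [hQ]
      linarith
    linarith
  calc shannonCap (copies G ℓ) ≤ L + shannonCap G := key1
    _ < L + qShannonCap G := by linarith
    _ ≤ qShannonCap (copies G ℓ) := key2

end ZeroError
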